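/- For an ideal gas, the quadratic form κ|_L = -(Rn/2)·T⁻²dT² - Rρ⁻²dρ² is negative definite at every point with T > 0, ρ > 0; hence the homentropic Euler system for an ideal gas is hyperbolic along every thermodynamic process. -/
import Mathlib


/- STATEMENT 14: For an ideal gas, κ|_L = -(Rn/2)T⁻²dT² - Rρ⁻²dρ² is negative
   definite at every point with T > 0, ρ > 0; hence the homentropic Euler system
   for an ideal gas is hyperbolic (p′(ρ) > 0, i.e. det P_ω = -4p′(ρ) < 0) along
   every thermodynamic process, where p(ρ) = R·exp(2s₀/(Rn))·ρ^{2/n+1}. -/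

theorem ideal_gas_kappa_negative_definite_and_hyperbolic
    (R n : ℝ) (hR : 0 < R) (hn : 0 < n) :
    (∀ T ρ : ℝ, 0 < T → 0 < ρ → ∀ dT dρ : ℝ, ¬(dT = 0 ∧ dρ = 0) →
      -(R * n / 2) / T ^ 2 * dT ^ 2 - R / ρ ^ 2 * dρ ^ 2 < 0) ∧
    (∀ s0 : ℝ, ∀ ρ : ℝ, 0 < ρ →
      0 < deriv (fun r : ℝ => R * Real.exp (2 * s0 / (R * n)) * r ^ (2 / n + 1)) ρ ∧
      -4 * deriv (fun r : ℝ => R * Real.exp (2 * s0 / (R * n)) * r ^ (2 / n + 1)) ρ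
        < 0) := by
  constructor
  · intro T ρ hT hρ dT dρ hne
    have hA : 0 < (R * n / 2) / T ^ 2 := by positivity
    have hB : 0 < R / ρ ^ 2 := by positivity
    have key : -(R * n / 2) / T ^ 2 * dT ^ 2 - R / ρ ^ 2 * dρ ^ 2
        = -((R * n / 2 / T ^ 2) * dT ^ 2 + (R / ρ ^ 2) * dρ ^ 2) := by ring
    rw [key]
    rcases Classical.em (dT = 0) with h1 | h1
    · have h2 : dρ ≠ 0 := fun h => hne ⟨h1, h⟩
      have h3 : 0 < dρ ^ 2 := by positivity
      linarith [mul_pos hB h3, mul_nonneg hA.le (sq_nonneg dT)]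

    · have h3 : 0 < dT ^ 2 := by positivity
      linarith [mul_pos hA h3, mul_nonneg hB.le (sq_nonneg dρ)]
  · intro s0 ρ hρ
    set C := R * Real.exp (2 * s0 / (R * n)) with hC
    have hCpos : 0 < C := by positivity
    have hd : HasDerivAt (fun r : ℝ => C * r ^ (2 / n + 1))
        (C * ((2 / n + 1) * ρ ^ (2 / n + 1 - 1))) ρ := by
      exact (Real.hasDerivAt_rpow_const (Or.inl (ne_of_gt hρ))).const_mul C
    have hder : deriv (fun r : ℝ => C * r ^ (2 / n + 1)) ρ
        = C * ((2 / n + 1) * ρ ^ (2 / n + 1 - 1)) := hd.deriv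
    have hexp : 0 < 2 / n + 1 := by positivity
    have hpos : 0 < C * ((2 / n + 1) * ρ ^ (2 / n + 1 - 1)) := by
      have := Real.rpow_pos_of_pos hρ (2 / n + 1 - 1)
      positivity
    rw [hder]
    exact ⟨hpos, by linarith⟩
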